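/- The family of univariate functions {N₀^{p,r} + N₁^{p,r}, N₁^{p,r}} ∪ {N_i^{p,r} : i ∈ I, i ≥ 2} on [0,1] is locally linearly independent: for every open O ⊆ ℝ with O ∩ [0,1] ≠ ∅, those functions of the family that do not vanish identically on O ∩ [0,1] are linearly independent as functions on O ∩ [0,1]. -/

import Mathlib

noncomputable section
open Set

namespace TwoPatch



/-- Cox–de Boor recursion for B-splines over the knot sequence `t`.  Degree-`0`
B-splines are the characteristic functions of `[t i, t (i+1))`, closed at the
right endpoint when `t (i+1) = 1` (the right end of the parametric domain),
and the usual convention `0/0 = 0` is used in the recursion. -/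
def coxDeBoor (t : ℕ → ℝ) : ℕ → ℕ → ℝ → ℝ
  | 0, i, x =>
      if (t i ≤ x ∧ x < t (i + 1)) ∨ (t i < t (i + 1) ∧ t (i + 1) = 1 ∧ x = 1) then 1 else 0
  | (d + 1), i, x =>
      (if t (i + d + 1) = t i then 0 else (x - t i) / (t (i + d + 1) - t i)) *
          coxDeBoor t d i x +
        (if t (i + d + 2) = t (i + 1) then 0
          else (t (i + d + 2) - x) / (t (i + d + 2) - t (i + 1))) *
          coxDeBoor t d (i + 1) x

/-- The open knot vector on `[0,1]` of degree `dg`:  `0` and `1` appear with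
multiplicity `dg + 1` and each of the `k` inner breakpoints `τ 0 < … < τ (k-1)`
appears with multiplicity `m`. -/
def openKnots (dg m k : ℕ) (τ : ℕ → ℝ) (j : ℕ) : ℝ :=
  if j ≤ dg then 0 else if dg + k * m < j then 1 else τ ((j - (dg + 1)) / m)

/-- The `i`-th B-spline of degree `dg`, inner-knot multiplicity `m`, over the
breakpoints `τ 0, …, τ (k-1)`. -/
def Bspl (dg m k : ℕ) (τ : ℕ → ℝ) (i : ℕ) : ℝ → ℝ :=
  coxDeBoor (openKnots dg m k τ) dg i

/-- The dimension of the corresponding spline space. -/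
def sdim (dg m k : ℕ) : ℕ := dg + 1 + k * m

/-- The univariate spline space, as a subspace of `ℝ → ℝ`. -/
def splineSpace (dg m k : ℕ) (τ : ℕ → ℝ) : Submodule ℝ (ℝ → ℝ) :=
  Submodule.span ℝ (Bspl dg m k τ '' Set.Iio (sdim dg m k))

/-- The tensor-product spline space `span {g(ξ₁)h(ξ₂) : g, h ∈ S}`. -/
def tensorSpace (dg m k : ℕ) (τ : ℕ → ℝ) : Submodule ℝ (ℝ × ℝ → ℝ) :=
  Submodule.span ℝ
    {f | ∃ g ∈ splineSpace dg m k τ, ∃ h ∈ splineSpace dg m k τ,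
        f = fun q : ℝ × ℝ => g q.1 * h q.2}

/-- The parametric interval `[0,1]`. -/
def I01 : Set ℝ := Set.Icc 0 1

/-- The parametric square `[0,1]²`. -/
def sq : Set (ℝ × ℝ) := Set.Icc (0, 0) (1, 1)

/-- Derivative of a univariate function within `[0,1]` (one-sided at the endpoints). -/
def d01 (g : ℝ → ℝ) (x : ℝ) : ℝ := derivWithin g I01 x

/-- First partial derivative (within `[0,1]` in the first variable). -/
def pd1 (f : ℝ × ℝ → ℝ) (q : ℝ × ℝ) : ℝ := derivWithin (fun s => f (s, q.2)) I01 q.1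

/-- Second partial derivative (within `[0,1]` in the second variable). -/
def pd2 (f : ℝ × ℝ → ℝ) (q : ℝ × ℝ) : ℝ := derivWithin (fun s => f (q.1, s)) I01 q.2

/-- First partial derivative of a map into `ℝ²`. -/
def pd1v (F : ℝ × ℝ → ℝ × ℝ) (q : ℝ × ℝ) : ℝ × ℝ :=
  (pd1 (fun x => (F x).1) q, pd1 (fun x => (F x).2) q)

/-- Second partial derivative of a map into `ℝ²`. -/
def pd2v (F : ℝ × ℝ → ℝ × ℝ) (q : ℝ × ℝ) : ℝ × ℝ :=
  (pd2 (fun x => (F x).1) q, pd2 (fun x => (F x).2) q)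

/-- Jacobian determinant. -/
def jacDet (F : ℝ × ℝ → ℝ × ℝ) (q : ℝ × ℝ) : ℝ :=
  pd1 (fun x => (F x).1) q * pd2 (fun x => (F x).2) q -
    pd1 (fun x => (F x).2) q * pd2 (fun x => (F x).1) q

/-- The Jacobian matrix. -/
def jacMat (F : ℝ × ℝ → ℝ × ℝ) (q : ℝ × ℝ) : Matrix (Fin 2) (Fin 2) ℝ :=
  !![pd1 (fun x => (F x).1) q, pd2 (fun x => (F x).1) q;
     pd1 (fun x => (F x).2) q, pd2 (fun x => (F x).2) q]

/-- Polynomials of degree at most one ("linear functions"). -/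
def IsLinearPoly (a : ℝ → ℝ) : Prop := ∃ c₀ c₁ : ℝ, a = fun x => c₀ + c₁ * x

/-- Breakpoints extended by the endpoints `0` and `1`. -/
def extBpt (k : ℕ) (τ : ℕ → ℝ) (i : ℕ) : ℝ :=
  if i = 0 then 0 else if i ≤ k then τ (i - 1) else 1

/-- One dyadic refinement of the breakpoint set `τ 0 < … < τ (k-1)`:
the old breakpoints together with the midpoints of the `k+1` intervals
determined by `{0} ∪ T ∪ {1}`. -/
def dyadicOnce (k : ℕ) (τ : ℕ → ℝ) (j : ℕ) : ℝ :=
  if j % 2 = 1 then τ (j / 2) else (extBpt k τ (j / 2) + extBpt k τ (j / 2 + 1)) / 2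

/-- Number of breakpoints at level `ℓ`. -/
def levelK (k : ℕ) : ℕ → ℕ
  | 0 => k
  | ℓ + 1 => 2 * levelK k ℓ + 1

/-- Breakpoints at level `ℓ` (iterated dyadic refinement). -/
def levelτ (k : ℕ) (τ : ℕ → ℝ) : ℕ → ℕ → ℝ
  | 0 => τ
  | ℓ + 1 => dyadicOnce (levelK k ℓ) (levelτ k τ ℓ)

/-- Pullback of the interior basis functions: `N_i^{p,r}(ξ₁) N_j^{p,r}(ξ₂)`. -/
def fOmega (p r k : ℕ) (τ : ℕ → ℝ) (i j : ℕ) (q : ℝ × ℝ) : ℝ :=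
  Bspl p (p - r) k τ i q.1 * Bspl p (p - r) k τ j q.2

/-- Pullback of the interface basis function `φ_{Γ₀,i}` on the patch with
gluing datum `βS`. -/
def fGamma0 (p r k : ℕ) (τ : ℕ → ℝ) (βS : ℝ → ℝ) (i : ℕ) (q : ℝ × ℝ) : ℝ :=
  Bspl p (p - r - 1) k τ i q.2 *
      (Bspl p (p - r) k τ 0 q.1 + Bspl p (p - r) k τ 1 q.1) +
    βS q.2 * d01 (Bspl p (p - r - 1) k τ i) q.2 * (τ 0 / (p : ℝ)) * Bspl p (p - r) k τ 1 q.1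

/-- Pullback of the interface basis function `φ_{Γ₁,i}` on the patch with
gluing datum `αS`. -/
def fGamma1 (p r k : ℕ) (τ : ℕ → ℝ) (αS : ℝ → ℝ) (i : ℕ) (q : ℝ × ℝ) : ℝ :=
  αS q.2 * Bspl (p - 1) (p - r - 1) k τ i q.2 * Bspl p (p - r) k τ 1 q.1

/-- Support of a function on the domain `Ω`. -/
def suppOn (Ω : Set (ℝ × ℝ)) (φ : ℝ × ℝ → ℝ) : Set (ℝ × ℝ) :=
  closure {x | x ∈ Ω ∧ φ x ≠ 0}

/-- The modified univariate family `{N₀ + N₁, N₁} ∪ {N_i : i ≥ 2}`. -/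
def modFam (p r k : ℕ) (τ : ℕ → ℝ) (i : ℕ) : ℝ → ℝ :=
  if i = 0 then fun x => Bspl p (p - r) k τ 0 x + Bspl p (p - r) k τ 1 x
  else Bspl p (p - r) k τ i

open Polynomial

variable {t : ℕ → ℝ}

lemma cdb_out (ht : Monotone t) (d : ℕ) : ∀ i (x : ℝ), x < 1 →
    (x < t i ∨ t (i + d + 1) ≤ x) → coxDeBoor t d i x = 0 := by
  induction d with
  | zero =>
    intro i x hx1 h
    simp only [coxDeBoor]
    rw [if_neg]
    rintro (⟨h1, h2⟩ | ⟨_, _, h3⟩)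
    · rcases h with h | h
      · exact absurd h1 (not_le.2 h)
      · exact absurd h2 (not_lt.2 h)
    · exact absurd h3 (ne_of_lt hx1)
  | succ d ih =>
    intro i x hx1 h
    simp only [coxDeBoor]
    rw [ih i x hx1, ih (i+1) x hx1, mul_zero, mul_zero, add_zero]
    · rcases h with h | h
      · left; exact lt_of_lt_of_le h (ht (Nat.le_succ i))
      · right; exact le_trans (ht (by omega : i + 1 + d + 1 ≤ i + (d+1) + 1)) h
    · rcases h with h | h
      · left; exact h
      · right; exact le_trans (ht (by omega : i + d + 1 ≤ i + (d+1) + 1)) h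

lemma cdb_one_out (ht : Monotone t) (d : ℕ) : ∀ i, t (i + d + 1) < 1 →
    coxDeBoor t d i 1 = 0 := by
  induction d with
  | zero =>
    intro i h
    simp only [coxDeBoor]
    rw [if_neg]
    rintro (⟨h1, h2⟩ | ⟨_, h3, _⟩)
    · exact absurd h2 (by linarith)
    · exact absurd h3 (ne_of_lt h)
  | succ d ih =>
    intro i h
    simp only [coxDeBoor]
    rw [ih i, ih (i+1), mul_zero, mul_zero, add_zero]
    · exact lt_of_le_of_lt (ht (by omega : i + 1 + d + 1 ≤ i + (d+1) + 1)) h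
    · exact lt_of_le_of_lt (ht (by omega : i + d + 1 ≤ i + (d+1) + 1)) h

/-- `x ∈ [0,1]` and `N_i^d(x) ≠ 0` forces `t i ≤ x ≤ t (i+d+1)`. -/
lemma cdb_supp (ht : Monotone t) {d i : ℕ} {x : ℝ} (hx0 : 0 ≤ x) (hx1 : x ≤ 1)
    (ht1 : ∀ j, t j ≤ 1) (h : coxDeBoor t d i x ≠ 0) :
    t i ≤ x ∧ x ≤ t (i + d + 1) := by
  rcases lt_or_eq_of_le hx1 with hlt | rfl
  · by_contra hc
    push_neg at hc
    rcases le_or_gt (t i) x with h1 | h1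
    · exact h (cdb_out ht d i x hlt (Or.inr (hc h1).le))
    · exact h (cdb_out ht d i x hlt (Or.inl h1))
  · refine ⟨ht1 i, ?_⟩
    by_contra hc
    push_neg at hc
    exact h (cdb_one_out ht d i hc)

/-- `0/0 = 0` convention for reciprocal knot differences. -/
def Dv (t : ℕ → ℝ) (i j : ℕ) : ℝ := if t j = t i then 0 else (t j - t i)⁻¹

lemma Dv_mul (t : ℕ → ℝ) (i j : ℕ) :
    Dv t i j * (t j - t i) = if t j = t i then 0 else 1 := by
  unfold Dv
  split
  · simp
  · exact inv_mul_cancel₀ (sub_ne_zero.2 (by assumption))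

/-- The polynomial giving `N_i^d` on the knot span `(t μ, t (μ+1))`. -/
def locPoly (t : ℕ → ℝ) (μ : ℕ) : ℕ → ℕ → Polynomial ℝ
  | 0, i => if i = μ then 1 else 0
  | (d + 1), i =>
      Polynomial.C (Dv t i (i + d + 1)) * (Polynomial.X - Polynomial.C (t i)) *
          locPoly t μ d i +
        Polynomial.C (Dv t (i + 1) (i + d + 2)) *
          (Polynomial.C (t (i + d + 2)) - Polynomial.X) * locPoly t μ d (i + 1)

lemma locPoly_out {μ : ℕ} (d : ℕ) : ∀ i, (μ < i ∨ i + d < μ) → locPoly t μ d i = 0 := by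
  induction d with
  | zero =>
    intro i h
    simp only [locPoly, if_neg (by omega : i ≠ μ)]
  | succ d ih =>
    intro i h
    simp only [locPoly, ih i (by omega), ih (i+1) (by omega), mul_zero, add_zero]

lemma locPoly_degen (ht : Monotone t) {μ : ℕ} (hspan : t μ < t (μ + 1)) {d i : ℕ}
    (h : t (i + d + 1) = t i) : locPoly t μ d i = 0 := by
  apply locPoly_out
  by_contra hc
  push_neg at hc
  have h1 : t i ≤ t μ := ht hc.1
  have h2 : t (μ + 1) ≤ t (i + d + 1) := ht (by omega)
  linarith

lemma eval_locPoly (ht : Monotone t) {μ : ℕ} {a b : ℝ} (hta : t μ ≤ a) (hbt : b ≤ t (μ + 1))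
    (hb1 : b ≤ 1) (d : ℕ) : ∀ i, ∀ x ∈ Set.Ioo a b,
    coxDeBoor t d i x = (locPoly t μ d i).eval x := by
  induction d with
  | zero =>
    intro i x hx
    simp only [coxDeBoor, locPoly]
    rcases lt_trichotomy i μ with h | rfl | h
    · rw [if_neg (by omega : ¬ i = μ)]
      rw [if_neg]
      · simp
      rintro (⟨h1, h2⟩ | ⟨_, _, h3⟩)
      · have : t (i + 1) ≤ t μ := ht (by omega)
        have := hx.1
        linarith
      · have := hx.2; linarith
    · rw [if_pos rfl, if_pos]
      · simp
      left
      constructor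
      · linarith [hx.1]
      · linarith [hx.2]
    · rw [if_neg (by omega : ¬ i = μ)]
      rw [if_neg]
      · simp
      rintro (⟨h1, h2⟩ | ⟨h0, _, h3⟩)
      · have : t (μ + 1) ≤ t i := ht (by omega)
        have := hx.2
        linarith
      · have := hx.2; linarith
  | succ d ih =>
    intro i x hx
    simp only [coxDeBoor, locPoly, Polynomial.eval_add, Polynomial.eval_mul,
      Polynomial.eval_sub, Polynomial.eval_C, Polynomial.eval_X]
    rw [ih i x hx, ih (i+1) x hx]
    congr 1
    · congr 1
      unfold Dv
      split
      · simp
      · rw [div_eq_inv_mul]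
    · congr 1
      unfold Dv
      split
      · simp
      · rw [div_eq_inv_mul]

lemma Dv_key (ht : Monotone t) (i d : ℕ) :
    Dv t (i + 1) (i + d + 2) *
      (Dv t i (i + d + 2) * (t (i + d + 2) - t i) -
        Dv t (i + 1) (i + d + 3) * (t (i + d + 3) - t (i + 1))) = 0 := by
  rw [Dv_mul, Dv_mul]
  by_cases h1 : t (i + d + 2) = t i
  · have hb : t (i + d + 2) = t (i + 1) := le_antisymm (h1 ▸ ht (by omega)) (ht (by omega))
    rw [show Dv t (i+1) (i+d+2) = 0 from if_pos hb]
    ring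
  · by_cases h2 : t (i + d + 3) = t (i + 1)
    · have hb : t (i + d + 2) = t (i + 1) :=
        le_antisymm (h2 ▸ ht (by omega)) (ht (by omega))
      rw [show Dv t (i+1) (i+d+2) = 0 from if_pos hb]
      ring
    · rw [if_neg h1, if_neg h2]
      ring

lemma deriv_locPoly (ht : Monotone t) {μ : ℕ} (d : ℕ) : ∀ i,
    Polynomial.derivative (locPoly t μ (d + 1) i) =
      Polynomial.C ((d : ℝ) + 1) *
        (Polynomial.C (Dv t i (i + d + 1)) * locPoly t μ d i -
          Polynomial.C (Dv t (i + 1) (i + d + 2)) * locPoly t μ d (i + 1)) := by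
  induction d with
  | zero =>
    intro i
    simp only [locPoly]
    split_ifs <;>
      · simp only [mul_one, mul_zero, add_zero, zero_add, Polynomial.derivative_mul,
          Polynomial.derivative_add, Polynomial.derivative_sub, Polynomial.derivative_C,
          Polynomial.derivative_X, Polynomial.derivative_zero, Polynomial.derivative_one,
          Nat.cast_zero, map_one]
        ring
  | succ d ih =>
    intro i
    have e1 : locPoly t μ (d + 1 + 1) i =
        Polynomial.C (Dv t i (i + (d+1) + 1)) * (Polynomial.X - Polynomial.C (t i)) *
            locPoly t μ (d+1) i +
          Polynomial.C (Dv t (i + 1) (i + (d+1) + 2)) *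
            (Polynomial.C (t (i + (d+1) + 2)) - Polynomial.X) * locPoly t μ (d+1) (i + 1) := rfl
    rw [e1]
    rw [Polynomial.derivative_add, Polynomial.derivative_mul, Polynomial.derivative_mul,
      Polynomial.derivative_mul, Polynomial.derivative_mul]
    rw [ih i, ih (i + 1)]
    simp only [Polynomial.derivative_C, Polynomial.derivative_sub, Polynomial.derivative_X]
    -- unfold the two (d+1)-level locPolys on the RHS
    have e2 : locPoly t μ (d + 1) i =
        Polynomial.C (Dv t i (i + d + 1)) * (Polynomial.X - Polynomial.C (t i)) *
            locPoly t μ d i +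
          Polynomial.C (Dv t (i + 1) (i + d + 2)) *
            (Polynomial.C (t (i + d + 2)) - Polynomial.X) * locPoly t μ d (i + 1) := rfl
    have e3 : locPoly t μ (d + 1) (i + 1) =
        Polynomial.C (Dv t (i+1) (i + d + 2)) * (Polynomial.X - Polynomial.C (t (i+1))) *
            locPoly t μ d (i+1) +
          Polynomial.C (Dv t (i + 2) (i + d + 3)) *
            (Polynomial.C (t (i + d + 3)) - Polynomial.X) * locPoly t μ d (i + 2) := by
      show locPoly t μ (d+1) (i+1) = _
      simp only [locPoly]
      norm_num [show i + 1 + d + 1 = i + d + 2 from by omega,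
        show i + 1 + d + 2 = i + d + 3 from by omega, show i + 1 + 1 = i + 2 from by omega]
    rw [e2, e3]
    have key := Dv_key ht i d
    have keyC := congrArg Polynomial.C key
    push_cast [map_mul, map_sub, map_zero] at keyC
    simp only [show i + (d+1) + 1 = i + d + 2 from by omega,
      show i + (d+1) + 2 = i + d + 3 from by omega,
      show i + 1 + d + 1 = i + d + 2 from by omega,
      show i + 1 + d + 2 = i + d + 3 from by omega,
      show i + 1 + 1 = i + 2 from by omega,
      Nat.cast_add, Nat.cast_one, map_add, map_one, Polynomial.C_eq_natCast]
    linear_combination ((-(d:ℝ[X])-1) * locPoly t μ d (i+1)) * keyC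

lemma locPoly_partition (ht : Monotone t) {μ : ℕ} (hspan : t μ < t (μ + 1)) (d : ℕ) :
    ∀ m, μ = m + d → ∑ j ∈ Finset.range (d + 1), locPoly t μ d (m + j) = 1 := by
  induction d with
  | zero =>
    intro m hm
    simp [locPoly, hm]
  | succ d ih =>
    intro m hm
    have expand : ∀ j ∈ Finset.range (d + 2), locPoly t μ (d+1) (m + j) =
        Polynomial.C (Dv t (m+j) (m+j + d + 1)) * (Polynomial.X - Polynomial.C (t (m+j))) *
            locPoly t μ d (m+j) +
          Polynomial.C (Dv t (m+j+1) (m+j + d + 2)) *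
            (Polynomial.C (t (m+j + d + 2)) - Polynomial.X) * locPoly t μ d (m+j+1) := by
      intro j _
      rfl
    rw [Finset.sum_congr rfl expand, Finset.sum_add_distrib]
    rw [Finset.sum_range_succ' _ (d+1), Finset.sum_range_succ _ (d+1)]
    have h0 : locPoly t μ d (m + 0) = 0 := locPoly_out d _ (by omega)
    have hlast : locPoly t μ d (m + (d+1) + 1) = 0 := locPoly_out d _ (by omega)
    rw [h0, hlast]
    simp only [mul_zero, add_zero, zero_add]
    have step : ∀ j ∈ Finset.range (d + 1),
        Polynomial.C (Dv t (m+(j+1)) (m+(j+1) + d + 1)) *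
            (Polynomial.X - Polynomial.C (t (m+(j+1)))) * locPoly t μ d (m+(j+1)) +
          Polynomial.C (Dv t (m+j+1) (m+j + d + 2)) *
            (Polynomial.C (t (m+j + d + 2)) - Polynomial.X) * locPoly t μ d (m+j+1) =
        locPoly t μ d ((m+1) + j) := by
      intro j _
      have e2 : m + (j+1) + d + 1 = m + j + d + 2 := by omega
      have e1 : m + (j+1) = m + j + 1 := by omega
      have e3 : (m+1) + j = m + j + 1 := by omega
      rw [e2, e1, e3]
      by_cases hdeg : t (m + j + d + 2) = t (m + j + 1)
      · rw [locPoly_degen ht hspan (by rw [show m+j+1+d+1 = m+j+d+2 from by omega]; exact hdeg)]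
        simp
      · have hC : Dv t (m+j+1) (m+j+d+2) = (t (m+j+d+2) - t (m+j+1))⁻¹ := if_neg hdeg
        rw [hC]
        have hne : t (m+j+d+2) - t (m+j+1) ≠ 0 := sub_ne_zero.2 hdeg
        have : (Polynomial.C ((t (m+j+d+2) - t (m+j+1))⁻¹) *
            ((Polynomial.X - Polynomial.C (t (m+j+1))) +
              (Polynomial.C (t (m+j+d+2)) - Polynomial.X))) = 1 := by
          rw [show (Polynomial.X - Polynomial.C (t (m+j+1))) +
              (Polynomial.C (t (m+j+d+2)) - Polynomial.X) =
              Polynomial.C (t (m+j+d+2) - t (m+j+1)) from by push_cast [map_sub]; ring]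
          rw [← Polynomial.C_mul, inv_mul_cancel₀ hne, Polynomial.C_1]
        calc Polynomial.C ((t (m+j+d+2) - t (m+j+1))⁻¹) * (Polynomial.X - Polynomial.C (t (m+j+1))) *
              locPoly t μ d (m+j+1) +
            Polynomial.C ((t (m+j+d+2) - t (m+j+1))⁻¹) *
              (Polynomial.C (t (m+j+d+2)) - Polynomial.X) * locPoly t μ d (m+j+1)
            = (Polynomial.C ((t (m+j+d+2) - t (m+j+1))⁻¹) *
              ((Polynomial.X - Polynomial.C (t (m+j+1))) +
                (Polynomial.C (t (m+j+d+2)) - Polynomial.X))) * locPoly t μ d (m+j+1) := by ring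
          _ = locPoly t μ d (m+j+1) := by rw [this, one_mul]
    rw [← Finset.sum_add_distrib, Finset.sum_congr rfl step]
    exact ih (m+1) (by omega)

lemma locPoly_indep (ht : Monotone t) {μ : ℕ} (hspan : t μ < t (μ + 1)) (d : ℕ) :
    ∀ m (c : ℕ → ℝ), μ = m + d →
      ∑ j ∈ Finset.range (d + 1), Polynomial.C (c j) * locPoly t μ d (m + j) = 0 →
      ∀ j ≤ d, c j = 0 := by
  induction d with
  | zero =>
    intro m c hm hsum j hj
    interval_cases j
    have h1 : Polynomial.C (c 0) * locPoly t μ 0 (m + 0) = 0 := by simpa using hsum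
    rw [show m + 0 = μ from by omega] at h1
    simp only [locPoly, if_pos] at h1
    simpa using h1
  | succ d ih =>
    intro m c hm hsum j hj
    -- differentiate
    have hder : ∑ j ∈ Finset.range (d + 2), Polynomial.C (c j) *
        (Polynomial.C ((d : ℝ) + 1) *
          (Polynomial.C (Dv t (m+j) (m+j + d + 1)) * locPoly t μ d (m+j) -
            Polynomial.C (Dv t (m+j+1) (m+j + d + 2)) * locPoly t μ d (m+j+1))) = 0 := by
      have := congrArg Polynomial.derivative hsum
      rw [Polynomial.derivative_sum, Polynomial.derivative_zero] at this
      rw [← this]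
      apply Finset.sum_congr rfl
      intro j _
      rw [Polynomial.derivative_mul, Polynomial.derivative_C, zero_mul, zero_add,
        deriv_locPoly ht d (m+j)]
    -- regroup into a combination of degree-d locPolys
    have expand2 : ∀ j ∈ Finset.range (d + 2), Polynomial.C (c j) *
        (Polynomial.C ((d : ℝ) + 1) *
          (Polynomial.C (Dv t (m+j) (m+j + d + 1)) * locPoly t μ d (m+j) -
            Polynomial.C (Dv t (m+j+1) (m+j + d + 2)) * locPoly t μ d (m+j+1))) =
        Polynomial.C (c j * (((d:ℝ)+1) * Dv t (m+j) (m+j + d + 1))) * locPoly t μ d (m+j)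
        - Polynomial.C (c j * (((d:ℝ)+1) * Dv t (m+j+1) (m+j + d + 2))) *
            locPoly t μ d (m+j+1) := by
      intro j _
      simp only [map_mul]
      ring
    rw [Finset.sum_congr rfl expand2, Finset.sum_sub_distrib,
      Finset.sum_range_succ' _ (d+1), Finset.sum_range_succ _ (d+1)] at hder
    rw [locPoly_out d (m+0) (by omega), locPoly_out d (m+(d+1)+1) (by omega)] at hder
    simp only [mul_zero, add_zero, zero_add] at hder
    rw [← Finset.sum_sub_distrib] at hder
    have hsum2 : ∑ j ∈ Finset.range (d + 1),
        Polynomial.C ((c (j+1) - c j) * (((d:ℝ)+1) * Dv t (m+j+1) (m+j + d + 2))) *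
          locPoly t μ d ((m+1) + j) = 0 := by
      rw [← hder]
      apply Finset.sum_congr rfl
      intro j _
      rw [show m+(j+1)+d+1 = m+j+d+2 from by omega, show m+(j+1) = m+j+1 from by omega,
        show (m+1)+j = m+j+1 from by omega,
        show (c (j+1) - c j) * (((d:ℝ)+1) * Dv t (m+j+1) (m+j+d+2)) =
          c (j+1) * (((d:ℝ)+1) * Dv t (m+j+1) (m+j+d+2)) -
            c j * (((d:ℝ)+1) * Dv t (m+j+1) (m+j+d+2)) from by ring,
        map_sub, sub_mul]
    have hc' := ih (m+1)
      (fun j => (c (j+1) - c j) * (((d:ℝ)+1) * Dv t (m+j+1) (m+j + d + 2)))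
      (by omega) hsum2
    have hstep : ∀ j ≤ d, c (j+1) = c j := by
      intro j hjd
      have h0 := hc' j hjd
      have hne : t (m+j+d+2) ≠ t (m+j+1) := by
        have h1 : t (m+j+1) ≤ t μ := ht (by omega)
        have h2 : t (μ+1) ≤ t (m+j+d+2) := ht (by omega)
        intro he
        rw [he] at h2
        linarith
      have hDv : Dv t (m+j+1) (m+j+d+2) ≠ 0 := by
        unfold Dv
        rw [if_neg hne]
        exact inv_ne_zero (sub_ne_zero.2 hne)
      have hd1 : ((d:ℝ)+1) ≠ 0 := by positivity
      rcases mul_eq_zero.1 h0 with h | h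
      · linarith [sub_eq_zero.1 h]
      · rcases mul_eq_zero.1 h with h | h
        · exact absurd h hd1
        · exact absurd h hDv
    have hconst : ∀ j, j ≤ d + 1 → c j = c 0 := by
      intro j
      induction j with
      | zero => intro _; rfl
      | succ n ihn =>
        intro hj
        rw [hstep n (by omega)]
        exact ihn (by omega)
    have hzero : c 0 = 0 := by
      have hs : ∑ j ∈ Finset.range (d + 2), Polynomial.C (c 0) * locPoly t μ (d+1) (m+j) = 0 := by
        rw [← hsum]
        apply Finset.sum_congr rfl
        intro j hj
        rw [hconst j (by simpa using Nat.lt_succ_iff.1 (Finset.mem_range.1 hj))]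
      rw [← Finset.mul_sum, locPoly_partition ht hspan (d+1) m hm, mul_one] at hs
      exact Polynomial.C_eq_zero.1 hs
    rw [hconst j hj]
    exact hzero

section Knots

variable {dg m k : ℕ} {τ : ℕ → ℝ}

lemma tau_mono (hτmono : ∀ i, i + 1 < k → τ i < τ (i + 1)) :
    ∀ n a, a + n < k → τ a ≤ τ (a + n) := by
  intro n
  induction n with
  | zero => intro a _; simp
  | succ n ihn =>
    intro a h
    have h1 : τ a ≤ τ (a + n) := ihn a (by omega)
    have h2 : τ (a + n) < τ (a + n + 1) := hτmono (a + n) (by omega)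
    have : a + (n + 1) = a + n + 1 := by omega
    rw [this]
    linarith

lemma tau_mono' (hτmono : ∀ i, i + 1 < k → τ i < τ (i + 1)) {a b : ℕ}
    (hab : a ≤ b) (hbk : b < k) : τ a ≤ τ b := by
  have := tau_mono hτmono (b - a) a (by omega)
  rwa [show a + (b - a) = b from by omega] at this

lemma idx_lt (hm : 1 ≤ m) {j : ℕ} (h1 : dg < j) (h2 : j ≤ dg + k * m) :
    (j - (dg + 1)) / m < k := by
  have h3 : j - (dg + 1) ≤ k * m - 1 := by omega
  have h4 : 1 ≤ k * m := by omega
  calc (j - (dg + 1)) / m ≤ (k * m - 1) / m := Nat.div_le_div_right h3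
    _ < k := by
        rw [Nat.div_lt_iff_lt_mul (by omega : 0 < m)]
        omega

lemma openKnots_mono (hm : 1 ≤ m) (hτpos : ∀ i < k, 0 < τ i) (hτlt : ∀ i < k, τ i < 1)
    (hτmono : ∀ i, i + 1 < k → τ i < τ (i + 1)) : Monotone (openKnots dg m k τ) := by
  apply monotone_nat_of_le_succ
  intro j
  unfold openKnots
  by_cases c1 : j + 1 ≤ dg
  · rw [if_pos (by omega : j ≤ dg), if_pos c1]
  rw [if_neg c1]
  by_cases c0 : j ≤ dg
  · -- j = dg
    rw [if_pos c0]
    by_cases c4 : dg + k * m < j + 1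
    · rw [if_pos c4]; norm_num
    · rw [if_neg c4, show j + 1 - (dg + 1) = 0 from by omega, Nat.zero_div]
      have hkm : 1 ≤ k * m := by omega
      have hk : 0 < k := by
        rcases Nat.eq_zero_or_pos k with rfl | h
        · simp at hkm
        · exact h
      exact (hτpos 0 hk).le
  rw [if_neg c0]
  by_cases c2 : dg + k * m < j
  · rw [if_pos c2, if_pos (by omega)]
  rw [if_neg c2]
  by_cases c4 : dg + k * m < j + 1
  · -- j = dg + k * m
    rw [if_pos c4]
    exact (hτlt _ (idx_lt hm (by omega) (by omega))).le
  · rw [if_neg c4]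
    apply tau_mono' hτmono (Nat.div_le_div_right (by omega))
    exact idx_lt hm (by omega) (by omega)

lemma openKnots_lt_one (hm : 1 ≤ m) (hτlt : ∀ i < k, τ i < 1) {j : ℕ}
    (h : j ≤ dg + k * m) : openKnots dg m k τ j < 1 := by
  unfold openKnots
  split_ifs with c1 c2
  · norm_num
  · omega
  · exact hτlt _ (idx_lt hm (by omega) h)

lemma openKnots_le_one (hm : 1 ≤ m) (hτlt : ∀ i < k, τ i < 1) (j : ℕ) :
    openKnots dg m k τ j ≤ 1 := by
  by_cases h : j ≤ dg + k * m
  · exact (openKnots_lt_one hm hτlt h).le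
  · unfold openKnots
    rw [if_neg (by omega), if_pos (by omega)]

lemma openKnots_eq_one {j : ℕ} (h : dg + k * m < j) : openKnots dg m k τ j = 1 := by
  unfold openKnots
  rw [if_neg (by omega), if_pos h]

lemma openKnots_dg : openKnots dg m k τ dg = 0 := if_pos le_rfl

lemma openKnots_succ_eq (hm : 2 ≤ m) :
    openKnots dg m k τ (dg + 1) = openKnots dg m k τ (dg + 2) := by
  rcases Nat.eq_zero_or_pos k with rfl | hk
  · rw [openKnots_eq_one (by omega), openKnots_eq_one (by omega)]
  · have hkm : 2 ≤ k * m := le_trans hm (Nat.le_mul_of_pos_left m hk)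
    unfold openKnots
    rw [if_neg (by omega), if_neg (by omega), if_neg (by omega), if_neg (by omega)]
    rw [show dg + 1 - (dg + 1) = 0 from by omega, show dg + 2 - (dg + 1) = 1 from by omega,
      Nat.zero_div, Nat.div_eq_of_lt (by omega)]

lemma openKnots_dg2_pos (hm : 2 ≤ m) (hτpos : ∀ i < k, 0 < τ i) :
    0 < openKnots dg m k τ (dg + 2) := by
  rcases Nat.eq_zero_or_pos k with rfl | hk
  · rw [openKnots_eq_one (by omega)]; norm_num
  · have hkm : 2 ≤ k * m := le_trans hm (Nat.le_mul_of_pos_left m hk)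
    unfold openKnots
    rw [if_neg (by omega), if_neg (by omega), show dg + 2 - (dg + 1) = 1 from by omega,
      Nat.div_eq_of_lt (by omega)]
    exact hτpos 0 hk

end Knots

lemma window (p m k : ℕ) (τ : ℕ → ℝ) (hp : 3 ≤ p) (hm : 1 ≤ m)
    (hτpos : ∀ i < k, 0 < τ i) (hτlt : ∀ i < k, τ i < 1)
    (hτmono : ∀ i, i + 1 < k → τ i < τ (i + 1))
    (O : Set ℝ) (hO : IsOpen O) (c' : ℕ → ℝ)
    (hvan : ∀ x ∈ O ∩ I01, ∑ n ∈ Finset.range (sdim p m k), c' n * Bspl p m k τ n x = 0)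
    (x₀ : ℝ) (hx₀O : x₀ ∈ O) (hx₀0 : 0 ≤ x₀) (hx₀1 : x₀ ≤ 1)
    (lo hi : ℕ) (hlos : lo < sdim p m k)
    (hlox : openKnots p m k τ lo ≤ x₀) (hxhi : x₀ ≤ openKnots p m k τ hi)
    (hlohi : openKnots p m k τ lo < openKnots p m k τ hi) :
    ∃ μ, p ≤ μ ∧ lo ≤ μ ∧ μ < hi ∧
      openKnots p m k τ μ < openKnots p m k τ (μ + 1) ∧
      ∀ j, μ ≤ j + p → j ≤ μ → c' j = 0 := by
  set t := openKnots p m k τ with htdef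
  have ht : Monotone t := openKnots_mono hm hτpos hτlt hτmono
  have ht0 : t p = 0 := openKnots_dg
  obtain ⟨δ, hδ, hball⟩ := Metric.isOpen_iff.1 hO x₀ hx₀O
  set u := max (max (x₀ - δ) (t lo)) 0 with hu
  set v := min (min (x₀ + δ) (t hi)) 1 with hv
  have hlokm : lo ≤ p + k * m := by
    have : sdim p m k = p + 1 + k * m := rfl
    omega
  have htlo1 : t lo < 1 := openKnots_lt_one hm hτlt hlokm
  have htlo0 : 0 ≤ t lo := by
    have h := ht (Nat.zero_le lo)
    rwa [show t 0 = 0 from if_pos (by omega)] at h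
  have huv : u < v := by
    refine max_lt (max_lt ?_ ?_) ?_ <;> refine lt_min (lt_min ?_ ?_) ?_
    · linarith
    · linarith
    · linarith
    · linarith
    · exact hlohi
    · exact htlo1
    · linarith
    · linarith
    · norm_num
  have hIoo_sub : Set.Ioo u v ⊆ O ∩ I01 := by
    intro x hx
    have h1 : x₀ - δ ≤ u := le_trans (le_max_left _ _) (le_max_left _ _)
    have h2 : v ≤ x₀ + δ := le_trans (min_le_left _ _) (min_le_left _ _)
    have h3 : (0:ℝ) ≤ u := le_max_right _ _
    have h4 : v ≤ 1 := min_le_right _ _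
    refine ⟨hball ?_, ⟨by linarith [hx.1], by linarith [hx.2]⟩⟩
    rw [Metric.mem_ball, Real.dist_eq, abs_lt]
    constructor <;> linarith [hx.1, hx.2]
  set top := p + k * m + p + 1 with htop
  have hstop : sdim p m k ≤ top := by
    have : sdim p m k = p + 1 + k * m := rfl
    omega
  have hinf : (Set.Ioo u v).Infinite := Set.Ioo_infinite huv
  obtain ⟨y, hy⟩ := (hinf.diff (((Finset.range (top+1)).image t).finite_toSet)).nonempty
  have hyu : u < y := hy.1.1
  have hyv : y < v := hy.1.2
  have hynk : ∀ j ≤ top, t j ≠ y := by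
    intro j hj he
    exact hy.2 (Finset.mem_coe.2 (Finset.mem_image.2 ⟨j, Finset.mem_range.2 (by omega), he⟩))
  have hy0 : 0 < y := lt_of_le_of_lt (le_max_right _ _) hyu
  have hy1 : y < 1 := lt_of_lt_of_le hyv (min_le_right _ _)
  set F := (Finset.range (top+1)).filter (fun j => t j < y) with hFdef
  have hpF : p ∈ F := Finset.mem_filter.2 ⟨Finset.mem_range.2 (by omega), by rw [ht0]; exact hy0⟩
  have hFne : F.Nonempty := ⟨p, hpF⟩
  set μ := F.max' hFne with hμdef
  have hμF := F.max'_mem hFne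
  have htμy : t μ < y := (Finset.mem_filter.1 hμF).2
  have hpμ : p ≤ μ := F.le_max' p hpF
  have hloμ : lo ≤ μ := by
    apply F.le_max' lo
    refine Finset.mem_filter.2 ⟨Finset.mem_range.2 (by omega), ?_⟩
    have : t lo ≤ u := le_trans (le_max_right _ _) (le_max_left _ _)
    linarith
  have hμkm : μ ≤ p + k * m := by
    by_contra h
    push_neg at h
    have h1 : t μ = 1 := openKnots_eq_one h
    linarith
  have hyμ1 : y < t (μ + 1) := by
    rcases lt_or_ge y (t (μ + 1)) with h | h
    · exact h
    exfalso
    rcases lt_or_eq_of_le h with h' | h'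
    · have : μ + 1 ∈ F := Finset.mem_filter.2 ⟨Finset.mem_range.2 (by omega), h'⟩
      have := F.le_max' (μ+1) this
      omega
    · exact hynk (μ+1) (by omega) h'
  have hspan : t μ < t (μ + 1) := lt_trans htμy hyμ1
  set a := max u (t μ) with ha
  set b := min v (t (μ + 1)) with hb
  have hya : a < y := max_lt hyu htμy
  have hyb : y < b := lt_min hyv hyμ1
  have hab : a < b := lt_trans hya hyb
  have habO : Set.Ioo a b ⊆ O ∩ I01 :=
    subset_trans (Set.Ioo_subset_Ioo (le_max_left _ _) (min_le_left _ _)) hIoo_sub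
  have hb1 : b ≤ 1 := le_trans (min_le_left _ _) (min_le_right _ _)
  have heval := eval_locPoly ht (le_max_right u (t μ)) (min_le_right v (t (μ+1))) hb1 p
  have hμs : μ < sdim p m k := by
    have : sdim p m k = p + 1 + k * m := rfl
    omega
  have hWsub : (Finset.range (p+1)).image (fun j => μ - p + j) ⊆ Finset.range (sdim p m k) := by
    intro n hn
    obtain ⟨j, hj, rfl⟩ := Finset.mem_image.1 hn
    have := Finset.mem_range.1 hj
    exact Finset.mem_range.2 (by omega)
  have hP0 : ∑ j ∈ Finset.range (p+1),
      Polynomial.C (c' (μ - p + j)) * locPoly t μ p (μ - p + j) = 0 := by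
    apply Polynomial.eq_zero_of_infinite_isRoot
    apply Set.Infinite.mono ?_ (Set.Ioo_infinite hab)
    intro x hx
    show Polynomial.IsRoot _ x
    rw [Polynomial.IsRoot.def, Polynomial.eval_finset_sum]
    have e2 : ∀ j ∈ Finset.range (p+1),
        Polynomial.eval x (Polynomial.C (c' (μ - p + j)) * locPoly t μ p (μ - p + j)) =
          (fun n => c' n * Polynomial.eval x (locPoly t μ p n)) (μ - p + j) := by
      intro j _
      rw [Polynomial.eval_mul, Polynomial.eval_C]
    rw [Finset.sum_congr rfl e2]
    have himg : ∑ n ∈ (Finset.range (p+1)).image (fun j => μ - p + j),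
        (fun n => c' n * Polynomial.eval x (locPoly t μ p n)) n =
        ∑ j ∈ Finset.range (p+1),
          (fun n => c' n * Polynomial.eval x (locPoly t μ p n)) (μ - p + j) :=
      Finset.sum_image (by intro a1 _ b1 _ h1; have h1' : μ - p + a1 = μ - p + b1 := h1; omega)
    rw [← himg]
    rw [Finset.sum_subset hWsub]
    · rw [show (0:ℝ) = ∑ n ∈ Finset.range (sdim p m k), c' n * Bspl p m k τ n x from
        (hvan x (habO hx)).symm]
      apply Finset.sum_congr rfl
      intro n _
      rw [show Bspl p m k τ n x = coxDeBoor t p n x from rfl, heval n x hx]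
    · intro n hn hnW
      have hz : locPoly t μ p n = 0 := by
        apply locPoly_out
        by_contra hc
        push_neg at hc
        exact hnW (Finset.mem_image.2 ⟨n - (μ - p), Finset.mem_range.2 (by omega), by omega⟩)
      rw [hz, Polynomial.eval_zero, mul_zero]
  have hind := locPoly_indep ht hspan p (μ - p) (fun j => c' (μ - p + j)) (by omega) hP0
  refine ⟨μ, hpμ, hloμ, ?_, hspan, ?_⟩
  · by_contra hc
    push_neg at hc
    have h1 : t hi ≤ t μ := ht hc
    have h2 : v ≤ t hi := le_trans (min_le_left _ _) (min_le_right _ _)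
    linarith
  · intro j hj1 hj2
    have h := hind (j - (μ - p)) (by omega)
    rwa [show μ - p + (j - (μ - p)) = j from by omega] at h


/-- The family `{N₀^{p,r} + N₁^{p,r}, N₁^{p,r}} ∪
{N_i^{p,r} : i ∈ I, i ≥ 2}` is locally linearly independent on `[0,1]`:
for every open `O ⊆ ℝ` with `O ∩ [0,1] ≠ ∅`, those functions of the family that
do not vanish identically on `O ∩ [0,1]` are linearly independent as functions
on `O ∩ [0,1]`. -/
theorem modified_family_locally_linearly_independent (p r k : ℕ) (hp : 3 ≤ p)
    (hr : 1 ≤ r) (hrp : r ≤ p - 2) (τ : ℕ → ℝ) (hτpos : ∀ i < k, 0 < τ i)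
    (hτlt : ∀ i < k, τ i < 1) (hτmono : ∀ i, i + 1 < k → τ i < τ (i + 1))
    (O : Set ℝ) (hO : IsOpen O) (hne : (O ∩ I01).Nonempty) :
    LinearIndependent ℝ
      (fun e : {i : ℕ // i < sdim p (p - r) k ∧
          ¬ ∀ x ∈ O ∩ I01, modFam p r k τ i x = 0} =>
        (O ∩ I01).restrict (modFam p r k τ e.1)) := by
  rw [linearIndependent_iff']
  intro s g hsum i hi
  have hm2 : 2 ≤ p - r := by omega
  set t := openKnots p (p - r) k τ with htdef
  have ht : Monotone t := openKnots_mono (by omega) hτpos hτlt hτmono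
  have ht1 : ∀ j, t j ≤ 1 := openKnots_le_one (by omega) hτlt
  have hsd : sdim p (p - r) k = p + 1 + k * (p - r) := rfl
  classical
  set c : ℕ → ℝ := fun n => ∑ e ∈ s, if e.1 = n then g e else 0 with hc
  have hce : ∀ e ∈ s, c e.1 = g e := by
    intro e he
    rw [hc]
    simp only []
    rw [Finset.sum_eq_single e]
    · rw [if_pos rfl]
    · intro e' _ hne'
      rw [if_neg (fun h => hne' (Subtype.ext h))]
    · intro h
      exact absurd he h
  have hcomb : ∀ x ∈ O ∩ I01,
      ∑ n ∈ Finset.range (sdim p (p - r) k), c n * modFam p r k τ n x = 0 := by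
    intro x hx
    have h1 : ∑ e ∈ s, g e * modFam p r k τ e.1 x = 0 := by
      have h2 := congrFun hsum ⟨x, hx⟩
      simp at h2; exact h2
    calc ∑ n ∈ Finset.range (sdim p (p - r) k), c n * modFam p r k τ n x
        = ∑ n ∈ Finset.range (sdim p (p - r) k), ∑ e ∈ s,
            (if e.1 = n then g e * modFam p r k τ n x else 0) := by
          apply Finset.sum_congr rfl
          intro n _
          rw [hc]
          simp only []
          rw [Finset.sum_mul]
          apply Finset.sum_congr rfl
          intro e _
          rw [ite_mul, zero_mul]
      _ = ∑ e ∈ s, ∑ n ∈ Finset.range (sdim p (p - r) k),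
            (if e.1 = n then g e * modFam p r k τ n x else 0) := Finset.sum_comm
      _ = ∑ e ∈ s, g e * modFam p r k τ e.1 x := by
          apply Finset.sum_congr rfl
          intro e he
          rw [Finset.sum_ite_eq]
          rw [if_pos (Finset.mem_range.2 e.2.1)]
      _ = 0 := h1
  set c' : ℕ → ℝ := fun n => if n = 1 then c 0 + c 1 else c n with hc'
  have hvan : ∀ x ∈ O ∩ I01,
      ∑ n ∈ Finset.range (sdim p (p - r) k), c' n * Bspl p (p - r) k τ n x = 0 := by
    intro x hx
    rw [← hcomb x hx]
    have hdiff : ∀ n ∈ Finset.range (sdim p (p - r) k),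
        c' n * Bspl p (p - r) k τ n x = c n * modFam p r k τ n x +
          ((if n = 0 then -(c 0 * Bspl p (p - r) k τ 1 x) else 0) +
            (if n = 1 then c 0 * Bspl p (p - r) k τ 1 x else 0)) := by
      intro n _
      by_cases h0 : n = 0
      · subst h0
        simp only [hc', modFam]
        norm_num
        ring
      by_cases h1 : n = 1
      · subst h1
        simp only [hc', modFam]
        norm_num
        ring
      · simp only [hc', modFam, if_neg h0, if_neg h1]
        ring
    rw [Finset.sum_congr rfl hdiff, Finset.sum_add_distrib, Finset.sum_add_distrib]
    rw [Finset.sum_ite_eq' (Finset.range (sdim p (p - r) k)) 0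
        (fun _ => -(c 0 * Bspl p (p - r) k τ 1 x)),
      Finset.sum_ite_eq' (Finset.range (sdim p (p - r) k)) 1
        (fun _ => c 0 * Bspl p (p - r) k τ 1 x)]
    rw [if_pos (Finset.mem_range.2 (by omega)), if_pos (Finset.mem_range.2 (by omega))]
    ring
  obtain ⟨hi_lt, hnv⟩ := i.2
  push_neg at hnv
  obtain ⟨x₀, hx₀mem, hx₀ne⟩ := hnv
  have hx₀O : x₀ ∈ O := hx₀mem.1
  have hx₀I : x₀ ∈ I01 := hx₀mem.2
  rw [← hce i hi]
  by_cases hcase : i.1 ≤ 1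
  · -- the two modified functions: window at the first span
    have hBor : Bspl p (p - r) k τ 0 x₀ ≠ 0 ∨ Bspl p (p - r) k τ 1 x₀ ≠ 0 := by
      by_cases h0 : i.1 = 0
      · rw [h0] at hx₀ne
        simp only [modFam, if_pos] at hx₀ne
        by_contra hcon
        push_neg at hcon
        rw [hcon.1, hcon.2, add_zero] at hx₀ne
        exact hx₀ne rfl
      · have h1 : i.1 = 1 := by omega
        rw [h1] at hx₀ne
        simp only [modFam, one_ne_zero, if_false] at hx₀ne
        exact Or.inr hx₀ne
    have hxle : x₀ ≤ t (p + 2) := by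
      rcases hBor with h | h
      · have hsupp := cdb_supp ht hx₀I.1 hx₀I.2 ht1 h
        exact le_trans hsupp.2 (ht (by omega))
      · have hsupp := cdb_supp ht hx₀I.1 hx₀I.2 ht1 h
        exact le_trans hsupp.2 (ht (by omega))
    have ht00 : openKnots p (p - r) k τ 0 = 0 := if_pos (by omega)
    obtain ⟨μ, hμ1, hμ2, hμ3, hμ4, hμ5⟩ := window p (p - r) k τ hp (by omega)
      hτpos hτlt hτmono O hO c' hvan x₀ hx₀O hx₀I.1 hx₀I.2 0 (p + 2)
      (by omega) (by rw [ht00]; exact hx₀I.1) hxle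
      (by rw [ht00]; exact openKnots_dg2_pos hm2 hτpos)
    have hμp : μ = p := by
      by_contra hcon
      have hμ11 : μ = p + 1 := by omega
      rw [hμ11, show p + 1 + 1 = p + 2 from by omega] at hμ4
      rw [← openKnots_succ_eq hm2] at hμ4
      exact absurd hμ4 (lt_irrefl _)
    have hc'0 : c' 0 = 0 := hμ5 0 (by omega) (by omega)
    have hc'1 : c' 1 = 0 := hμ5 1 (by omega) (by omega)
    have hc0 : c 0 = 0 := by
      have : c' 0 = c 0 := if_neg (by norm_num)
      rw [← this, hc'0]
    have hc1 : c 1 = 0 := by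
      have h2 : c' 1 = c 0 + c 1 := if_pos rfl
      rw [hc'1, hc0] at h2
      linarith
    by_cases h0 : i.1 = 0
    · rw [h0, hc0]
    · rw [show i.1 = 1 from by omega, hc1]
  · -- ordinary B-spline
    push_neg at hcase
    have hB : Bspl p (p - r) k τ i.1 x₀ ≠ 0 := by
      rw [show modFam p r k τ i.1 = Bspl p (p - r) k τ i.1 from
        if_neg (by omega : ¬ i.1 = 0)] at hx₀ne
      exact hx₀ne
    have hsupp := cdb_supp ht hx₀I.1 hx₀I.2 ht1 hB
    have hnd : t i.1 < t (i.1 + p + 1) := by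
      rcases lt_or_eq_of_le (ht (by omega : i.1 ≤ i.1 + p + 1)) with h | h
      · exact h
      exfalso
      rcases lt_or_eq_of_le hx₀I.2 with hx1 | hx1
      · refine hB (cdb_out ht p i.1 x₀ hx1 (Or.inr ?_))
        rw [← h]
        exact hsupp.1
      · rw [hx1] at hB
        refine hB (cdb_one_out ht p i.1 ?_)
        rw [← h]
        exact openKnots_lt_one (by omega) hτlt (by omega)
    obtain ⟨μ, hμ1, hμ2, hμ3, hμ4, hμ5⟩ := window p (p - r) k τ hp (by omega)
      hτpos hτlt hτmono O hO c' hvan x₀ hx₀O hx₀I.1 hx₀I.2 i.1 (i.1 + p + 1)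
      hi_lt hsupp.1 hsupp.2 hnd
    have hci : c' i.1 = 0 := hμ5 i.1 (by omega) hμ2
    have : c' i.1 = c i.1 := if_neg (by omega)
    rw [← this, hci]


end TwoPatch
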